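/- For every even integer L ≥ 2, every β ≥ 0 and every ε with 0 < ε < 1/4, the toy-model partition function satisfies Z_Λ(β,ε) ≥ (ε/2)^{L²} · exp(2βL²) + (1 − 4ε)^{L²/2}. -/

import Mathlib

open MeasureTheory Real

/-- The site space: the discrete torus of side `L`. -/
abbrev Torus (L : ℕ) := ZMod L × ZMod L

/-- A configuration of the toy model: one circle-valued spin per site. -/
abbrev Config (L : ℕ) := Torus L → AddCircle (1 : ℝ)

/-- The two unit coordinate vectors `e₁ = (1,0)` and `e₂ = (0,1)`. -/
def coordVec (L : ℕ) : Fin 2 → Torus L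
  | 0 => (1, 0)
  | 1 => (0, 1)

/-- The product of normalized Haar measures on the spins. -/
noncomputable def toyMeasure (L : ℕ) [NeZero L] : Measure (Config L) :=
  Measure.pi fun _ => (AddCircle.haarAddCircle : Measure (AddCircle (1 : ℝ)))

/-- A bond `(x, x + eᵢ)` of the configuration `φ` is `ε`-ordered when
`‖φ x - φ (x + eᵢ)‖ ≤ ε/2`, where `‖·‖` is the quotient norm on `ℝ/ℤ`. -/
def IsOrderedBond (L : ℕ) [NeZero L] (ε : ℝ) (φ : Config L) (x : Torus L) (i : Fin 2) : Prop :=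
  ‖φ x - φ (x + coordVec L i)‖ ≤ ε / 2

noncomputable instance (L : ℕ) [NeZero L] (ε : ℝ) (φ : Config L) (x : Torus L) (i : Fin 2) :
    Decidable (IsOrderedBond L ε φ x i) :=
  Real.decidableLE _ _

/-- The toy Hamiltonian: minus the number of `ε`-ordered bonds. -/
noncomputable def toyH (L : ℕ) [NeZero L] (ε : ℝ) (φ : Config L) : ℝ :=
  -(∑ x : Torus L, ∑ i : Fin 2, if IsOrderedBond L ε φ x i then (1 : ℝ) else 0)

/-- The toy-model partition function. -/
noncomputable def toyZ (L : ℕ) [NeZero L] (β ε : ℝ) : ℝ :=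
  ∫ φ, Real.exp (-β * toyH L ε φ) ∂(toyMeasure L)

lemma card_torus (L : ℕ) [NeZero L] : Fintype.card (Torus L) = L ^ 2 := by
  simp [sq, ZMod.card]

lemma haar_closedBall (r : ℝ) :
    (AddCircle.haarAddCircle : Measure (AddCircle (1:ℝ))) (Metric.closedBall 0 r) =
      ENNReal.ofReal (min 1 (2 * r)) := by
  have h := AddCircle.volume_closedBall (T := (1:ℝ)) (x := (0 : AddCircle (1:ℝ))) r
  rwa [AddCircle.volume_eq_smul_haarAddCircle, ENNReal.ofReal_one, one_smul] at h

set_option maxHeartbeats 1000000 in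
lemma measurable_toyH (L : ℕ) [NeZero L] (ε : ℝ) : Measurable (toyH L ε) := by
  apply Measurable.neg
  apply Finset.measurable_sum
  intro x _
  apply Finset.measurable_sum
  intro i _
  have hm : Measurable fun φ : Config L => ‖φ x - φ (x + coordVec L i)‖ :=
    ((measurable_pi_apply x).sub (measurable_pi_apply (x + coordVec L i))).norm
  exact Measurable.ite (hm measurableSet_Iic) measurable_const measurable_const

set_option maxHeartbeats 1000000 in
/-- the two-term lower bound on the toy-model partition function. -/
theorem toy_partition_lower_bound (L : ℕ) (hL : 2 ≤ L) (hLeven : Even L) (β ε : ℝ)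
    (hβ : 0 ≤ β) (hε : 0 < ε) (hε' : ε < 1 / 4) :
    haveI : NeZero L := ⟨by omega⟩
    toyZ L β ε ≥
      (ε / 2) ^ (L ^ 2) * Real.exp (2 * β * L ^ 2) + (1 - 4 * ε) ^ (L ^ 2 / 2) := by
  haveI : NeZero L := ⟨by omega⟩
  show toyZ L β ε ≥ _
  set μ := toyMeasure L with hμdef
  haveI : IsProbabilityMeasure μ := by
    rw [hμdef]; unfold toyMeasure; infer_instance
  have hL4 : 4 ≤ L ^ 2 := by nlinarith
  obtain ⟨S, -, hScard⟩ := Finset.exists_subset_card_eq (s := (Finset.univ : Finset (Torus L))) (n := L ^ 2 / 2)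
    (by rw [Finset.card_univ, card_torus]; omega)
  have hSne : S.Nonempty := Finset.card_pos.mp (by rw [hScard]; omega)
  set A : Set (Config L) := Set.univ.pi fun _ => Metric.closedBall (0 : AddCircle (1:ℝ)) (ε/4)
    with hAdef
  set C : Set (AddCircle (1:ℝ)) := (Metric.closedBall 0 (2*ε))ᶜ with hCdef
  set B : Set (Config L) := Set.univ.pi fun x => if x ∈ S then C else Set.univ with hBdef
  have hAm : MeasurableSet A := MeasurableSet.univ_pi fun _ => measurableSet_closedBall
  have hCm : MeasurableSet C := measurableSet_closedBall.compl
  have hBm : MeasurableSet B := MeasurableSet.univ_pi fun x => by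
    by_cases h : x ∈ S <;> simp [h, hCm]
  have hdisj : Disjoint A B := by
    rw [Set.disjoint_left]
    intro φ hA hB
    obtain ⟨x, hx⟩ := hSne
    have h1 : ‖φ x‖ ≤ ε / 4 := mem_closedBall_zero_iff.mp (hA x (Set.mem_univ x))
    have h2 := hB x (Set.mem_univ x)
    simp only [if_pos hx] at h2
    exact h2 (mem_closedBall_zero_iff.mpr (by linarith))
  have hμA : μ A = ENNReal.ofReal (ε/2) ^ (L ^ 2) := by
    rw [hμdef]; unfold toyMeasure
    rw [hAdef, Measure.pi_pi]
    rw [Finset.prod_const, haar_closedBall, Finset.card_univ, card_torus]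
    congr 2
    rw [min_eq_right (by linarith)]
    ring
  have hμB : μ B = ENNReal.ofReal (1 - 4*ε) ^ (L ^ 2 / 2) := by
    rw [hμdef]; unfold toyMeasure
    rw [hBdef, Measure.pi_pi]
    have hC : (AddCircle.haarAddCircle : Measure (AddCircle (1:ℝ))) C =
        ENNReal.ofReal (1 - 4*ε) := by
      rw [hCdef, prob_compl_eq_one_sub measurableSet_closedBall, haar_closedBall,
        min_eq_right (by linarith), ← ENNReal.ofReal_one,
        ← ENNReal.ofReal_sub _ (by linarith)]
      ring_nf
    calc (∏ x : Torus L, (AddCircle.haarAddCircle : Measure (AddCircle (1:ℝ)))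
            (if x ∈ S then C else Set.univ))
        = ∏ x : Torus L, (if x ∈ S then ENNReal.ofReal (1 - 4*ε) else 1) := by
          apply Finset.prod_congr rfl
          intro x _
          by_cases h : x ∈ S <;> simp [h, hC]
      _ = ENNReal.ofReal (1 - 4*ε) ^ (L ^ 2 / 2) := by
          rw [Finset.prod_ite_mem, Finset.univ_inter, Finset.prod_const, hScard]
  -- pointwise facts about the integrand
  set f : Config L → ℝ := fun φ => Real.exp (-β * toyH L ε φ) with hfdef
  have hN_nonneg : ∀ φ, 0 ≤ -toyH L ε φ := by
    intro φ
    unfold toyH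
    rw [neg_neg]
    positivity
  have hN_le : ∀ φ, -toyH L ε φ ≤ 2 * L ^ 2 := by
    intro φ
    unfold toyH
    rw [neg_neg]
    calc (∑ x : Torus L, ∑ i : Fin 2, if IsOrderedBond L ε φ x i then (1:ℝ) else 0)
        ≤ ∑ x : Torus L, ∑ i : Fin 2, (1:ℝ) := by
          apply Finset.sum_le_sum; intro x _
          apply Finset.sum_le_sum; intro i _
          split <;> norm_num
      _ = 2 * L ^ 2 := by
          simp [Finset.sum_const, card_torus]
          ring
  have hf_le : ∀ φ, f φ ≤ Real.exp (2 * β * L ^ 2) := by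
    intro φ
    apply Real.exp_le_exp.mpr
    have : -β * toyH L ε φ = β * (-toyH L ε φ) := by ring
    rw [this]
    calc β * (-toyH L ε φ) ≤ β * (2 * L ^ 2) := by
          exact mul_le_mul_of_nonneg_left (hN_le φ) hβ
      _ = 2 * β * L ^ 2 := by ring
  have hf_one : ∀ φ, 1 ≤ f φ := by
    intro φ
    rw [← Real.exp_zero]
    apply Real.exp_le_exp.mpr
    have : -β * toyH L ε φ = β * (-toyH L ε φ) := by ring
    rw [this]
    exact mul_nonneg hβ (hN_nonneg φ)
  have hfA : ∀ φ ∈ A, f φ = Real.exp (2 * β * L ^ 2) := by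
    intro φ hA
    have hbond : ∀ (x : Torus L) (i : Fin 2), IsOrderedBond L ε φ x i := by
      intro x i
      have h1 : ‖φ x‖ ≤ ε / 4 := mem_closedBall_zero_iff.mp (hA x (Set.mem_univ x))
      have h2 : ‖φ (x + coordVec L i)‖ ≤ ε / 4 :=
        mem_closedBall_zero_iff.mp (hA (x + coordVec L i) (Set.mem_univ _))
      calc ‖φ x - φ (x + coordVec L i)‖ ≤ ‖φ x‖ + ‖φ (x + coordVec L i)‖ := norm_sub_le _ _
        _ ≤ ε / 2 := by linarith
    have hH : toyH L ε φ = -(2 * L ^ 2) := by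
      unfold toyH
      congr 1
      calc (∑ x : Torus L, ∑ i : Fin 2, if IsOrderedBond L ε φ x i then (1:ℝ) else 0)
          = ∑ x : Torus L, ∑ i : Fin 2, (1:ℝ) := by
            apply Finset.sum_congr rfl; intro x _
            apply Finset.sum_congr rfl; intro i _
            rw [if_pos (hbond x i)]
        _ = 2 * L ^ 2 := by
            simp [Finset.sum_const, card_torus]
            ring
    rw [hfdef]
    simp only [hH]
    ring_nf
  set g : Config L → ℝ := fun φ =>
    A.indicator (fun _ => Real.exp (2 * β * L ^ 2)) φ + B.indicator (fun _ => (1:ℝ)) φ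
    with hgdef
  have hg_int : Integrable g μ :=
    ((integrable_const _).indicator hAm).add ((integrable_const _).indicator hBm)
  have hf_meas : Measurable f := (measurable_toyH L ε).const_mul (-β) |>.exp
  have hf_int : Integrable f μ := by
    refine Integrable.mono' (integrable_const (Real.exp (2 * β * L ^ 2)))
      hf_meas.aestronglyMeasurable ?_
    filter_upwards with φ
    rw [Real.norm_eq_abs, abs_of_pos (Real.exp_pos _)]
    exact hf_le φ
  have hge : ∀ φ, g φ ≤ f φ := by
    intro φ
    rw [hgdef]
    by_cases hA : φ ∈ A
    · have hB : φ ∉ B := fun hB => Set.disjoint_left.mp hdisj hA hB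
      simp only [Set.indicator_of_mem hA, Set.indicator_of_notMem hB, add_zero]
      exact (hfA φ hA).ge
    · simp only [Set.indicator_of_notMem hA, zero_add]
      by_cases hB : φ ∈ B
      · rw [Set.indicator_of_mem hB]; exact hf_one φ
      · rw [Set.indicator_of_notMem hB]; positivity
  have hint : ∫ φ, g φ ∂μ ≤ ∫ φ, f φ ∂μ := integral_mono hg_int hf_int hge
  have hgval : ∫ φ, g φ ∂μ =
      (ε / 2) ^ (L ^ 2) * Real.exp (2 * β * L ^ 2) + (1 - 4 * ε) ^ (L ^ 2 / 2) := by
    rw [hgdef]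
    rw [integral_add ((integrable_const _).indicator hAm) ((integrable_const _).indicator hBm),
      integral_indicator_const _ hAm, integral_indicator_const _ hBm, measureReal_def, measureReal_def, hμA, hμB]
    rw [ENNReal.toReal_pow, ENNReal.toReal_pow, ENNReal.toReal_ofReal (by linarith),
      ENNReal.toReal_ofReal (by linarith)]
    simp [smul_eq_mul]
  rw [ge_iff_le, ← hgval]
  exact hint.trans_eq (by rw [hfdef]; rfl)
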